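/- Error recursion bound: if the scheme truncation errors satisfy max_i |R_i^l| ≤ C₁(n^β + h²) for all l, and the errors e_i^l = y(x_i,t_l) - Y_i^l satisfy the perturbed scheme with e_i^0 = 0 and homogeneous boundary conditions, then for all 1 ≤ l ≤ n, ‖e^l‖_∞ ≤ C₁(n^β + h²) · Γ(2-α) / (τ_{l-1}^{-α} - ∑_{j=0}^{l-2}(τ_{j+1}^{-α} a_{j+1,l} - τ_j^{-α} a_{j,l})). -/

import Mathlib

noncomputable def gradedCoef (r α : ℝ) (j l : ℕ) : ℝ :=
  (((l : ℝ) ^ r - (j : ℝ) ^ r) / (((j : ℝ) + 1) ^ r - (j : ℝ) ^ r)) ^ (1 - α) -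
  (((l : ℝ) ^ r - ((j : ℝ) + 1) ^ r) / (((j : ℝ) + 1) ^ r - (j : ℝ) ^ r)) ^ (1 - α)

noncomputable def meshPt (r T : ℝ) (n i : ℕ) : ℝ := ((i : ℝ) / (n : ℝ)) ^ r * T

noncomputable def meshStep (r T : ℝ) (n i : ℕ) : ℝ := meshPt r T n (i + 1) - meshPt r T n i

/-- The operator `T₁` of the implicit scheme, applied at time level `l`. -/
noncomputable def T1op (α r T v D h : ℝ) (n : ℕ) (Y : ℕ → ℕ → ℝ) (i l : ℕ) : ℝ :=
  meshStep r T n (l - 1) ^ (-α) / Real.Gamma (2 - α) * Y i l +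
    v * (Y (i + 1) l - Y (i - 1) l) / (2 * h) -
    D * (Y (i + 1) l - 2 * Y i l + Y (i - 1) l) / h ^ 2

/-- The operator `T₂` of the implicit scheme, applied at time level `l - 1`. -/
noncomputable def T2op (α r T : ℝ) (n : ℕ) (Y : ℕ → ℕ → ℝ) (i l : ℕ) : ℝ :=
  meshStep r T n (l - 1) ^ (-α) / Real.Gamma (2 - α) * Y i (l - 1) -
    (1 / Real.Gamma (2 - α)) *
      ∑ j ∈ Finset.range (l - 1),
        meshStep r T n j ^ (-α) * gradedCoef r α j l * (Y i (j + 1) - Y i j)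

noncomputable def ccoef (α r T : ℝ) (n j l : ℕ) : ℝ :=
  meshStep r T n j ^ (-α) * gradedCoef r α j l

section helpers

variable {α r T : ℝ} {n : ℕ}

lemma d_pos (hr : 1 ≤ r) (j : ℕ) : 0 < ((j : ℝ) + 1) ^ r - (j : ℝ) ^ r := by
  have h0 : (0:ℝ) ≤ (j:ℝ) := Nat.cast_nonneg j
  exact sub_pos.2 (Real.rpow_lt_rpow h0 (lt_add_one _) (by linarith))

lemma meshStep_eq (hr : 1 ≤ r) (hn : 1 ≤ n) (j : ℕ) :
    meshStep r T n j = (((j : ℝ) + 1) ^ r - (j : ℝ) ^ r) * (T / (n : ℝ) ^ r) := by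
  have hn0 : (0:ℝ) < n := by exact_mod_cast hn
  unfold meshStep meshPt
  rw [Real.div_rpow (by positivity) hn0.le, Real.div_rpow (by positivity) hn0.le]
  push_cast
  have hnr : ((n:ℝ)) ^ r ≠ 0 := by positivity
  field_simp

lemma meshStep_pos (hr : 1 ≤ r) (hT : 0 < T) (hn : 1 ≤ n) (j : ℕ) :
    0 < meshStep r T n j := by
  have hn0 : (0:ℝ) < n := by exact_mod_cast hn
  rw [meshStep_eq hr hn]
  exact mul_pos (d_pos hr j) (div_pos hT (Real.rpow_pos_of_pos hn0 r))

lemma ccoef_eq (hα0 : 0 < α) (hα1 : α < 1) (hr : 1 ≤ r) (hT : 0 < T) (hn : 1 ≤ n)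
    {j l : ℕ} (hjl : j + 1 ≤ l) :
    ccoef α r T n j l = (T / (n : ℝ) ^ r) ^ (-α) *
      ((((l : ℝ) ^ r - (j : ℝ) ^ r) ^ (1 - α) -
        ((l : ℝ) ^ r - ((j : ℝ) + 1) ^ r) ^ (1 - α)) /
        (((j : ℝ) + 1) ^ r - (j : ℝ) ^ r)) := by
  have hn0 : (0:ℝ) < n := by exact_mod_cast hn
  have hd : 0 < ((j : ℝ) + 1) ^ r - (j : ℝ) ^ r := d_pos hr j
  have hr0 : (0:ℝ) ≤ r := by linarith
  have h1 : (0:ℝ) ≤ (l : ℝ) ^ r - (j : ℝ) ^ r := by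
    have : (j:ℝ) ≤ (l:ℝ) := by exact_mod_cast Nat.le_of_succ_le hjl
    exact sub_nonneg.2 (Real.rpow_le_rpow (Nat.cast_nonneg j) this hr0)
  have h2 : (0:ℝ) ≤ (l : ℝ) ^ r - ((j : ℝ) + 1) ^ r := by
    have : ((j:ℝ) + 1) ≤ (l:ℝ) := by exact_mod_cast hjl
    exact sub_nonneg.2 (Real.rpow_le_rpow (by positivity) this hr0)
  have hTn : (0:ℝ) ≤ T / (n:ℝ) ^ r := le_of_lt (div_pos hT (Real.rpow_pos_of_pos hn0 r))
  unfold ccoef gradedCoef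
  rw [meshStep_eq hr hn, Real.mul_rpow hd.le hTn, Real.div_rpow h1 hd.le,
    Real.div_rpow h2 hd.le]
  have e1 : (((j : ℝ) + 1) ^ r - (j : ℝ) ^ r) ^ (1 - α)
      = (((j : ℝ) + 1) ^ r - (j : ℝ) ^ r) * (((j : ℝ) + 1) ^ r - (j : ℝ) ^ r) ^ (-α) := by
    rw [show (1:ℝ) - α = 1 + -α by ring, Real.rpow_one_add' hd.le (by intro hc; linarith)]
  rw [e1]
  have hdne : (((j : ℝ) + 1) ^ r - (j : ℝ) ^ r) ≠ 0 := hd.ne'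
  have hdα : (((j : ℝ) + 1) ^ r - (j : ℝ) ^ r) ^ (-α) ≠ 0 :=
    (Real.rpow_pos_of_pos hd (-α)).ne'
  field_simp

lemma gradedCoef_last (hα1 : α < 1) (hr : 1 ≤ r) {l : ℕ} (hl : 1 ≤ l) :
    gradedCoef r α (l - 1) l = 1 := by
  have hc : ((l - 1 : ℕ) : ℝ) = (l : ℝ) - 1 := by
    have : (1:ℝ) ≤ (l:ℝ) := by exact_mod_cast hl
    push_cast [Nat.cast_sub hl]
    ring
  have hl1 : (1:ℝ) ≤ (l:ℝ) := by exact_mod_cast hl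
  unfold gradedCoef
  rw [hc, show ((l:ℝ) - 1 + 1) = (l:ℝ) by ring]
  have hd : 0 < (l : ℝ) ^ r - ((l : ℝ) - 1) ^ r :=
    sub_pos.2 (Real.rpow_lt_rpow (by linarith) (by linarith) (by linarith))
  rw [div_self hd.ne', Real.one_rpow, sub_self, zero_div,
    Real.zero_rpow (by linarith : (1:ℝ) - α ≠ 0), sub_zero]

lemma concave_shift (c : ℝ) {p : ℝ} (hp0 : 0 ≤ p) (hp1 : p ≤ 1) :
    ConcaveOn ℝ (Set.Iic c) (fun x => (c - x) ^ p) := by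
  refine ⟨convex_Iic c, fun x hx y hy a b ha hb hab => ?_⟩
  have h1 : (0:ℝ) ≤ c - x := sub_nonneg.2 hx
  have h2 : (0:ℝ) ≤ c - y := sub_nonneg.2 hy
  have key := (Real.concaveOn_rpow hp0 hp1).2 (Set.mem_Ici.2 h1) (Set.mem_Ici.2 h2) ha hb hab
  simp only [smul_eq_mul] at key ⊢
  have heq : a * (c - x) + b * (c - y) = c - (a * x + b * y) := by
    have h3 : a * c + b * c = c := by rw [← add_mul, hab, one_mul]
    ring_nf
    ring_nf at h3
    linarith
  rw [heq] at key
  exact key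

lemma ccoef_mono (hα0 : 0 < α) (hα1 : α < 1) (hr : 1 ≤ r) (hT : 0 < T) (hn : 1 ≤ n)
    {j l : ℕ} (hjl : j + 2 ≤ l) :
    ccoef α r T n j l ≤ ccoef α r T n (j + 1) l := by
  rw [ccoef_eq hα0 hα1 hr hT hn (by omega : j + 1 ≤ l),
    ccoef_eq hα0 hα1 hr hT hn (by omega : (j + 1) + 1 ≤ l)]
  push_cast
  have hr0 : (0:ℝ) < r := by linarith
  set c := (l : ℝ) ^ r with hc
  set f : ℝ → ℝ := fun x => (c - x) ^ (1 - α) with hf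
  have hcon : ConcaveOn ℝ (Set.Iic c) f := concave_shift c (by linarith) (by linarith)
  have hj0 : (0:ℝ) ≤ (j:ℝ) := Nat.cast_nonneg j
  have hxy : (j:ℝ) ^ r < ((j:ℝ) + 1) ^ r := Real.rpow_lt_rpow hj0 (lt_add_one _) hr0
  have hyz : ((j:ℝ) + 1) ^ r < ((j:ℝ) + 1 + 1) ^ r :=
    Real.rpow_lt_rpow (by positivity) (by linarith) hr0
  have hxmem : (j:ℝ) ^ r ∈ Set.Iic c := by
    have : (j:ℝ) ≤ (l:ℝ) := by exact_mod_cast (by omega : j ≤ l)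
    exact Set.mem_Iic.2 (Real.rpow_le_rpow hj0 this (by linarith))
  have hzmem : ((j:ℝ) + 1 + 1) ^ r ∈ Set.Iic c := by
    have : ((j:ℝ) + 1 + 1) ≤ (l:ℝ) := by
      have h2 : ((j:ℕ):ℝ) + 2 ≤ (l:ℝ) := by exact_mod_cast hjl
      linarith
    exact Set.mem_Iic.2 (Real.rpow_le_rpow (by positivity) this (by linarith))
  have hs := hcon.slope_anti_adjacent hxmem hzmem hxy hyz
  have hC : (0:ℝ) ≤ (T / (n : ℝ) ^ r) ^ (-α) := (Real.rpow_nonneg (by positivity) _)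
  apply mul_le_mul_of_nonneg_left _ hC
  have e1 : (c - (j:ℝ) ^ r) ^ (1 - α) = f ((j:ℝ) ^ r) := rfl
  have e2 : (c - ((j:ℝ) + 1) ^ r) ^ (1 - α) = f (((j:ℝ) + 1) ^ r) := rfl
  have e3 : (c - ((j:ℝ) + 1 + 1) ^ r) ^ (1 - α) = f (((j:ℝ) + 1 + 1) ^ r) := rfl
  have goal1 : (f ((j:ℝ) ^ r) - f (((j:ℝ) + 1) ^ r)) / (((j:ℝ) + 1) ^ r - (j:ℝ) ^ r)
      ≤ (f (((j:ℝ) + 1) ^ r) - f (((j:ℝ) + 1 + 1) ^ r)) / (((j:ℝ) + 1 + 1) ^ r - ((j:ℝ) + 1) ^ r) := by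
    have a1 : (f ((j:ℝ) ^ r) - f (((j:ℝ) + 1) ^ r)) / (((j:ℝ) + 1) ^ r - (j:ℝ) ^ r)
        = -((f (((j:ℝ) + 1) ^ r) - f ((j:ℝ) ^ r)) / (((j:ℝ) + 1) ^ r - (j:ℝ) ^ r)) := by
      ring
    have a2 : (f (((j:ℝ) + 1) ^ r) - f (((j:ℝ) + 1 + 1) ^ r)) / (((j:ℝ) + 1 + 1) ^ r - ((j:ℝ) + 1) ^ r)
        = -((f (((j:ℝ) + 1 + 1) ^ r) - f (((j:ℝ) + 1) ^ r)) / (((j:ℝ) + 1 + 1) ^ r - ((j:ℝ) + 1) ^ r)) := by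
      ring
    rw [a1, a2]
    linarith
  exact goal1

lemma g_anti (hα0 : 0 < α) (hα1 : α < 1) {a b : ℝ} (ha : 1 ≤ a) (hab : a ≤ b) :
    b ^ (1 - α) - (b - 1) ^ (1 - α) ≤ a ^ (1 - α) - (a - 1) ^ (1 - α) := by
  set f : ℝ → ℝ := fun u => u ^ (1 - α) - (u - 1) ^ (1 - α) with hf
  have hanti : AntitoneOn f (Set.Ici 1) := by
    have hderiv : ∀ x ∈ interior (Set.Ici (1:ℝ)),
        HasDerivAt f ((1 - α) * x ^ (1 - α - 1) - 1 * (1 - α) * (x - 1) ^ (1 - α - 1)) x := by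
      intro x hx
      rw [interior_Ici] at hx
      have hx1 : (1:ℝ) < x := hx
      have h1 : HasDerivAt (fun u : ℝ => u ^ (1 - α)) ((1 - α) * x ^ (1 - α - 1)) x :=
        Real.hasDerivAt_rpow_const (Or.inl (by linarith))
      have h2 : HasDerivAt (fun u : ℝ => (u - 1) ^ (1 - α))
          (1 * (1 - α) * (x - 1) ^ (1 - α - 1)) x := by
        have hb : HasDerivAt (fun u : ℝ => u - 1) 1 x := (hasDerivAt_id x).sub_const 1
        exact hb.rpow_const (Or.inl (by intro hc; linarith [sub_eq_zero.1 hc]))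
      exact h1.sub h2
    apply antitoneOn_of_deriv_nonpos (convex_Ici 1)
    · apply ContinuousOn.sub
      · exact continuousOn_id.rpow_const (fun x hx => Or.inr (by linarith))
      · exact (continuousOn_id.sub continuousOn_const).rpow_const
          (fun x hx => Or.inr (by linarith))
    · intro x hx
      exact (hderiv x hx).differentiableAt.differentiableWithinAt
    · intro x hx
      rw [(hderiv x hx).deriv]
      rw [interior_Ici] at hx
      have hx1 : (1:ℝ) < x := hx
      have hexp : (1:ℝ) - α - 1 = -α := by ring
      rw [hexp]
      have hle : x ^ (-α) ≤ (x - 1) ^ (-α) := by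
        rw [Real.rpow_neg (by linarith), Real.rpow_neg (by linarith)]
        have h1 : (0:ℝ) < (x - 1) ^ α := Real.rpow_pos_of_pos (by linarith) α
        have h2 : (x - 1) ^ α ≤ x ^ α :=
          Real.rpow_le_rpow (by linarith) (by linarith) hα0.le
        exact inv_anti₀ h1 h2
      nlinarith [hle]
  have := hanti (Set.mem_Ici.2 ha) (Set.mem_Ici.2 (ha.trans hab)) hab
  simpa [hf] using this

lemma ccoef_zero_pos (hα0 : 0 < α) (hα1 : α < 1) (hr : 1 ≤ r) (hT : 0 < T) (hn : 1 ≤ n)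
    {l : ℕ} (hl : 1 ≤ l) : 0 < ccoef α r T n 0 l := by
  have hn0 : (0:ℝ) < n := by exact_mod_cast hn
  rw [ccoef_eq hα0 hα1 hr hT hn (by omega : 0 + 1 ≤ l)]
  have hl1 : (1:ℝ) ≤ (l:ℝ) := by exact_mod_cast hl
  have hlr1 : (1:ℝ) ≤ (l:ℝ) ^ r := by
    have := Real.rpow_le_rpow (by norm_num : (0:ℝ) ≤ 1) hl1 (by linarith : (0:ℝ) ≤ r)
    rwa [Real.one_rpow] at this
  have hz : ((0:ℕ):ℝ) ^ r = 0 := by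
    norm_num
    exact Real.zero_rpow (by linarith)
  have ho : (((0:ℕ):ℝ) + 1) ^ r = 1 := by norm_num
  rw [hz, ho]
  apply mul_pos (Real.rpow_pos_of_pos (div_pos hT (Real.rpow_pos_of_pos hn0 r)) _)
  rw [sub_zero, sub_zero]
  apply div_pos _ (by norm_num)
  have : ((l:ℝ) ^ r - 1) ^ (1 - α) < ((l:ℝ) ^ r) ^ (1 - α) :=
    Real.rpow_lt_rpow (by linarith) (by linarith) (by linarith)
  linarith

lemma ccoef_zero_anti (hα0 : 0 < α) (hα1 : α < 1) (hr : 1 ≤ r) (hT : 0 < T) (hn : 1 ≤ n)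
    {m l : ℕ} (hm : 1 ≤ m) (hml : m ≤ l) :
    ccoef α r T n 0 l ≤ ccoef α r T n 0 m := by
  rw [ccoef_eq hα0 hα1 hr hT hn (by omega : 0 + 1 ≤ l),
    ccoef_eq hα0 hα1 hr hT hn (by omega : 0 + 1 ≤ m)]
  have hz : ((0:ℕ):ℝ) ^ r = 0 := by
    norm_num
    exact Real.zero_rpow (by linarith)
  have ho : (((0:ℕ):ℝ) + 1) ^ r = 1 := by norm_num
  rw [hz, ho]
  have hm1 : (1:ℝ) ≤ (m:ℝ) := by exact_mod_cast hm
  have hmr1 : (1:ℝ) ≤ (m:ℝ) ^ r := by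
    have := Real.rpow_le_rpow (by norm_num : (0:ℝ) ≤ 1) hm1 (by linarith : (0:ℝ) ≤ r)
    rwa [Real.one_rpow] at this
  have hmlr : (m:ℝ) ^ r ≤ (l:ℝ) ^ r := by
    have : (m:ℝ) ≤ (l:ℝ) := by exact_mod_cast hml
    exact Real.rpow_le_rpow (by linarith) this (by linarith)
  have hC : (0:ℝ) ≤ (T / (n : ℝ) ^ r) ^ (-α) := Real.rpow_nonneg (by positivity) _
  simp only [sub_zero, div_one]
  exact mul_le_mul_of_nonneg_left (g_anti hα0 hα1 hmr1 hmlr) hC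

lemma abel_sum (c E : ℕ → ℝ) (m : ℕ) :
    ∑ j ∈ Finset.range m, c j * (E (j + 1) - E j)
      = c m * E m - c 0 * E 0 - ∑ j ∈ Finset.range m, (c (j + 1) - c j) * E (j + 1) := by
  induction m with
  | zero => simp
  | succ m ih => rw [Finset.sum_range_succ, ih, Finset.sum_range_succ]; ring

end helpers

lemma ccoef_last (hα1 : α < 1) (hr : 1 ≤ r) {l : ℕ} (hl : 1 ≤ l) :
    ccoef α r T n (l - 1) l = meshStep r T n (l - 1) ^ (-α) := by
  unfold ccoef
  rw [gradedCoef_last hα1 hr hl, mul_one]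

lemma T2_repr (hα1 : α < 1) (hr : 1 ≤ r) {l : ℕ} (hl : 1 ≤ l)
    (e : ℕ → ℕ → ℝ) (i : ℕ) (h0 : e i 0 = 0) :
    T2op α r T n e i l = (1 / Real.Gamma (2 - α)) *
      ∑ j ∈ Finset.range (l - 1),
        (ccoef α r T n (j + 1) l - ccoef α r T n j l) * e i (j + 1) := by
  unfold T2op
  have hsummand : ∀ j ∈ Finset.range (l - 1),
      meshStep r T n j ^ (-α) * gradedCoef r α j l * (e i (j + 1) - e i j)
        = ccoef α r T n j l * (e i (j + 1) - e i j) := fun j _ => rfl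
  rw [Finset.sum_congr rfl hsummand,
    abel_sum (fun j => ccoef α r T n j l) (e i) (l - 1), h0,
    ccoef_last hα1 hr hl]
  ring

theorem error_recursion_bound (α r T v D L : ℝ) (hα0 : 0 < α) (hα1 : α < 1)
    (hr : 1 ≤ r) (hT : 0 < T) (hv : 0 < v) (hD : 0 < D) (hL : 0 < L)
    (n K : ℕ) (hn : 1 ≤ n) (hK : 2 ≤ K) (h : ℝ) (hh : h = L / K)
    (hmesh : h < 2 * D / v)
    (β : ℝ) (hβ : β = -min (2 - α) (r * α))
    (e R : ℕ → ℕ → ℝ) (C₁ : ℝ) (hC₁ : 0 < C₁)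
    (hR : ∀ l, 1 ≤ l → l ≤ n → ∀ i, 1 ≤ i → i ≤ K - 1 →
      |R i l| ≤ C₁ * ((n : ℝ) ^ β + h ^ 2))
    (hinit : ∀ i, e i 0 = 0)
    (hbc : ∀ l, l ≤ n → e 0 l = 0 ∧ e K l = 0)
    (hrec : ∀ l, 1 ≤ l → l ≤ n → ∀ i, 1 ≤ i → i ≤ K - 1 →
      T1op α r T v D h n e i l = T2op α r T n e i l + R i l) :
    ∀ l, 1 ≤ l → l ≤ n → ∀ i, 1 ≤ i → i ≤ K - 1 →
      |e i l| ≤ C₁ * ((n : ℝ) ^ β + h ^ 2) * Real.Gamma (2 - α) /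
        (meshStep r T n (l - 1) ^ (-α) -
          ∑ j ∈ Finset.range (l - 1),
            (meshStep r T n (j + 1) ^ (-α) * gradedCoef r α (j + 1) l -
              meshStep r T n j ^ (-α) * gradedCoef r α j l)) := by
  have hΓ : 0 < Real.Gamma (2 - α) := Real.Gamma_pos_of_pos (by linarith)
  have hn0 : (0:ℝ) < n := by exact_mod_cast hn
  have hK0 : (0:ℝ) < K := by exact_mod_cast (by omega : 0 < K)
  have hhpos : 0 < h := by rw [hh]; exact div_pos hL hK0
  have hε : 0 < C₁ * ((n : ℝ) ^ β + h ^ 2) :=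
    mul_pos hC₁ (add_pos (Real.rpow_pos_of_pos hn0 β) (pow_pos hhpos 2))
  -- key claim, for all i ≤ K
  have key : ∀ l, 1 ≤ l → l ≤ n → ∀ i, i ≤ K →
      |e i l| ≤ C₁ * ((n : ℝ) ^ β + h ^ 2) * Real.Gamma (2 - α) / ccoef α r T n 0 l := by
    intro l
    induction l using Nat.strong_induction_on with
    | _ l IH =>
    intro hl1 hln i hiK
    have hc0 : 0 < ccoef α r T n 0 l := ccoef_zero_pos hα0 hα1 hr hT hn hl1
    set M := C₁ * ((n : ℝ) ^ β + h ^ 2) * Real.Gamma (2 - α) / ccoef α r T n 0 l with hMdef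
    have hM0 : 0 < M := div_pos (mul_pos hε hΓ) hc0
    obtain ⟨i₀, hi₀mem, hi₀max⟩ := Finset.exists_max_image (Finset.range (K + 1))
      (fun i => |e i l|) ⟨0, by simp⟩
    have hi₀K : i₀ ≤ K := by
      have := Finset.mem_range.1 hi₀mem; omega
    have hle : |e i l| ≤ |e i₀ l| := hi₀max i (Finset.mem_range.2 (by omega))
    by_cases hbd : i₀ = 0 ∨ i₀ = K
    · have hz : e i₀ l = 0 := by
        rcases hbd with hbd | hbd
        · rw [hbd]; exact (hbc l hln).1
        · rw [hbd]; exact (hbc l hln).2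
      calc |e i l| ≤ |e i₀ l| := hle
        _ = 0 := by rw [hz, abs_zero]
        _ ≤ M := hM0.le
    · push_neg at hbd
      have h1i : 1 ≤ i₀ := by omega
      have hiK1 : i₀ ≤ K - 1 := by omega
      have hrec' := hrec l hl1 hln i₀ h1i hiK1
      set A := meshStep r T n (l - 1) ^ (-α) / Real.Gamma (2 - α) with hAdef
      set P := D / h ^ 2 - v / (2 * h) with hPdef
      set Q := D / h ^ 2 + v / (2 * h) with hQdef
      have hvh : h * v < 2 * D := (lt_div_iff₀ hv).1 hmesh
      have hP : 0 ≤ P := by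
        rw [hPdef, sub_nonneg, div_le_div_iff₀ (by positivity) (by positivity)]
        nlinarith
      have hQ : 0 ≤ Q := by rw [hQdef]; positivity
      have hA : 0 < A :=
        div_pos (Real.rpow_pos_of_pos (meshStep_pos hr hT hn _) _) hΓ
      have hT1 : T1op α r T v D h n e i₀ l
          = (A + P + Q) * e i₀ l - P * e (i₀ + 1) l - Q * e (i₀ - 1) l := by
        rw [hAdef, hPdef, hQdef]
        unfold T1op
        have hne : h ≠ 0 := hhpos.ne'
        field_simp
        ring
      rw [hT1] at hrec'
      have heq : (A + P + Q) * e i₀ l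
          = T2op α r T n e i₀ l + R i₀ l + P * e (i₀ + 1) l + Q * e (i₀ - 1) l := by
        linarith
      -- bound T2
      have hT2 : |T2op α r T n e i₀ l| ≤ (1 / Real.Gamma (2 - α)) *
          ((ccoef α r T n (l - 1) l - ccoef α r T n 0 l) * M) := by
        rw [T2_repr hα1 hr hl1 e i₀ (hinit i₀)]
        rw [abs_mul, abs_of_nonneg (by positivity : (0:ℝ) ≤ 1 / Real.Gamma (2 - α))]
        apply mul_le_mul_of_nonneg_left _ (by positivity : (0:ℝ) ≤ 1 / Real.Gamma (2 - α))
        calc |∑ j ∈ Finset.range (l - 1),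
              (ccoef α r T n (j + 1) l - ccoef α r T n j l) * e i₀ (j + 1)|
            ≤ ∑ j ∈ Finset.range (l - 1),
              |(ccoef α r T n (j + 1) l - ccoef α r T n j l) * e i₀ (j + 1)| :=
              Finset.abs_sum_le_sum_abs _ _
          _ ≤ ∑ j ∈ Finset.range (l - 1),
              (ccoef α r T n (j + 1) l - ccoef α r T n j l) * M := by
              apply Finset.sum_le_sum
              intro j hj
              have hjlt : j < l - 1 := Finset.mem_range.1 hj
              have hmono : 0 ≤ ccoef α r T n (j + 1) l - ccoef α r T n j l :=
                sub_nonneg.2 (ccoef_mono hα0 hα1 hr hT hn (by omega : j + 2 ≤ l))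
              rw [abs_mul, abs_of_nonneg hmono]
              apply mul_le_mul_of_nonneg_left _ hmono
              have hIH := IH (j + 1) (by omega) (by omega) (by omega) i₀ hi₀K
              have hanti : ccoef α r T n 0 l ≤ ccoef α r T n 0 (j + 1) :=
                ccoef_zero_anti hα0 hα1 hr hT hn (by omega) (by omega)
              have hcj : 0 < ccoef α r T n 0 (j + 1) :=
                ccoef_zero_pos hα0 hα1 hr hT hn (by omega)
              refine hIH.trans ?_
              rw [hMdef]
              gcongr
          _ = (ccoef α r T n (l - 1) l - ccoef α r T n 0 l) * M := by
              rw [← Finset.sum_mul, Finset.sum_range_sub (fun j => ccoef α r T n j l)]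
      have hRb := hR l hl1 hln i₀ h1i hiK1
      have hnb1 : |e (i₀ + 1) l| ≤ |e i₀ l| :=
        hi₀max _ (Finset.mem_range.2 (by omega))
      have hnb0 : |e (i₀ - 1) l| ≤ |e i₀ l| :=
        hi₀max _ (Finset.mem_range.2 (by omega))
      have step1 : (A + P + Q) * |e i₀ l|
          ≤ (1 / Real.Gamma (2 - α)) * ((ccoef α r T n (l - 1) l - ccoef α r T n 0 l) * M)
            + C₁ * ((n : ℝ) ^ β + h ^ 2) + P * |e i₀ l| + Q * |e i₀ l| := by
        have habs : (A + P + Q) * |e i₀ l| = |(A + P + Q) * e i₀ l| := by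
          rw [abs_mul, abs_of_nonneg (by positivity : (0:ℝ) ≤ A + P + Q)]
        rw [habs, heq]
        have h4 : |T2op α r T n e i₀ l + R i₀ l + P * e (i₀ + 1) l + Q * e (i₀ - 1) l|
            ≤ |T2op α r T n e i₀ l| + |R i₀ l| + |P * e (i₀ + 1) l| + |Q * e (i₀ - 1) l| :=
          (abs_add_le _ _).trans (add_le_add ((abs_add_le _ _).trans
            (add_le_add (abs_add_le _ _) le_rfl)) le_rfl)
        rw [abs_mul P, abs_mul Q, abs_of_nonneg hP, abs_of_nonneg hQ] at h4
        have hb1 : P * |e (i₀ + 1) l| ≤ P * |e i₀ l| := mul_le_mul_of_nonneg_left hnb1 hP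
        have hb0 : Q * |e (i₀ - 1) l| ≤ Q * |e i₀ l| := mul_le_mul_of_nonneg_left hnb0 hQ
        exact h4.trans (add_le_add (add_le_add (add_le_add hT2 hRb) hb1) hb0)
      have step2 : A * |e i₀ l|
          ≤ (1 / Real.Gamma (2 - α)) * ((ccoef α r T n (l - 1) l - ccoef α r T n 0 l) * M)
            + C₁ * ((n : ℝ) ^ β + h ^ 2) := by linarith
      have hcM : ccoef α r T n 0 l * M = C₁ * ((n : ℝ) ^ β + h ^ 2) * Real.Gamma (2 - α) := by
        rw [hMdef]
        field_simp
      have hrhs : (1 / Real.Gamma (2 - α)) *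
            ((ccoef α r T n (l - 1) l - ccoef α r T n 0 l) * M)
          + C₁ * ((n : ℝ) ^ β + h ^ 2) = A * M := by
        rw [hAdef, ← ccoef_last (α := α) hα1 hr hl1]
        have hΓne : Real.Gamma (2 - α) ≠ 0 := hΓ.ne'
        field_simp
        linarith [hcM]
      have final : A * |e i₀ l| ≤ A * M := by rw [← hrhs]; exact step2
      exact hle.trans ((mul_le_mul_iff_right₀ hA).1 final)
  -- conclude
  intro l hl1 hln i hi1 hiK1
  have hden : meshStep r T n (l - 1) ^ (-α) -
      ∑ j ∈ Finset.range (l - 1),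
        (meshStep r T n (j + 1) ^ (-α) * gradedCoef r α (j + 1) l -
          meshStep r T n j ^ (-α) * gradedCoef r α j l)
      = ccoef α r T n 0 l := by
    have hsum : ∑ j ∈ Finset.range (l - 1),
        (meshStep r T n (j + 1) ^ (-α) * gradedCoef r α (j + 1) l -
          meshStep r T n j ^ (-α) * gradedCoef r α j l)
        = ccoef α r T n (l - 1) l - ccoef α r T n 0 l :=
      Finset.sum_range_sub (fun j => ccoef α r T n j l) (l - 1)
    rw [hsum, ccoef_last (α := α) hα1 hr hl1]
    ring
  rw [hden]
  exact key l hl1 hln i (by omega)
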